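/- Exact penalty, direction 1 (Theorem 2.1(1), Ralph–Wright): Assume ℓ_L < u_L and ℓ_R < u_R componentwise, and let (x*, y*) with y* = (y*_A, y*_L, y*_R) be a strongly stationary point of the LCQP. Define ρ̄ = 1 + max{0, max_{i ∈ 𝓛̄ˡ(x*)} (−y*_{L_i})/(R_i x* − ℓ_{R_i}), max_{i ∈ 𝓡̄ˡ(x*)} (−y*_{R_i})/(L_i x* − ℓ_{L_i})} (with the maxima over empty sets taken to be 0). Then for every ρ ≥ ρ̄, the point x* together with the multipliers ȳ_A = y*_A; ȳ_{L_i} = y*_{L_i} for i ∉ 𝓛ˡ(x*) and ȳ_{L_i} = y*_{L_i} + ρ(R_i x* − ℓ_{R_i}) for i ∈ 𝓛ˡ(x*); ȳ_{R_i} = y*_{R_i} for i ∉ 𝓡ˡ(x*) and ȳ_{R_i} = y*_{R_i} + ρ(L_i x* − ℓ_{L_i}) for i ∈ 𝓡ˡ(x*), is a KKT point of the penalized problem min_{x ∈ Ω̃} ψ_ρ(x). -/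
import Mathlib


open Matrix
open scoped Classical

noncomputable section

structure LCQPData (n nA nc : ℕ) where
  Q : Matrix (Fin n) (Fin n) ℝ
  g : Fin n → ℝ
  A : Matrix (Fin nA) (Fin n) ℝ
  lA : Fin nA → ℝ
  uA : Fin nA → ℝ
  L : Matrix (Fin nc) (Fin n) ℝ
  R : Matrix (Fin nc) (Fin n) ℝ
  lL : Fin nc → ℝ
  uL : Fin nc → ℝ
  lR : Fin nc → ℝ
  uR : Fin nc → ℝ

variable {n nA nc m : ℕ}

/-- Lower-active set of the constraint `l ≤ M x ≤ u`. -/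
def actL (M : Matrix (Fin m) (Fin n) ℝ) (l u : Fin m → ℝ) (x : Fin n → ℝ) : Set (Fin m) :=
  {i | l i = M.mulVec x i ∧ M.mulVec x i < u i}

/-- Upper-active set of the constraint `l ≤ M x ≤ u`. -/
def actU (M : Matrix (Fin m) (Fin n) ℝ) (l u : Fin m → ℝ) (x : Fin n → ℝ) : Set (Fin m) :=
  {i | l i < M.mulVec x i ∧ M.mulVec x i = u i}

/-- Free (inactive) set of the constraint `l ≤ M x ≤ u`. -/
def actF (M : Matrix (Fin m) (Fin n) ℝ) (l u : Fin m → ℝ) (x : Fin n → ℝ) : Set (Fin m) :=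
  {i | l i < M.mulVec x i ∧ M.mulVec x i < u i}

/-- The relaxed feasible set Ω̃. -/
def LCQPData.relFeas (P : LCQPData n nA nc) : Set (Fin n → ℝ) :=
  {x | (∀ i, P.lA i ≤ P.A.mulVec x i ∧ P.A.mulVec x i ≤ P.uA i) ∧
       (∀ i, P.lL i ≤ P.L.mulVec x i ∧ P.L.mulVec x i ≤ P.uL i) ∧
       (∀ i, P.lR i ≤ P.R.mulVec x i ∧ P.R.mulVec x i ≤ P.uR i)}

/-- The penalty function φ. -/
def LCQPData.phi (P : LCQPData n nA nc) (x : Fin n → ℝ) : ℝ :=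
  (P.L.mulVec x - P.lL) ⬝ᵥ (P.R.mulVec x - P.lR)

/-- The LCQP feasible set Ω. -/
def LCQPData.feas (P : LCQPData n nA nc) : Set (Fin n → ℝ) :=
  {x ∈ P.relFeas | P.phi x = 0}

/-- ∇φ(x). -/
def LCQPData.gradPhi (P : LCQPData n nA nc) (x : Fin n → ℝ) : Fin n → ℝ :=
  P.Lᵀ.mulVec (P.R.mulVec x - P.lR) + P.Rᵀ.mulVec (P.L.mulVec x - P.lL)

/-- The quadratic objective f. -/
def LCQPData.obj (P : LCQPData n nA nc) (x : Fin n → ℝ) : ℝ :=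
  (1/2) * (x ⬝ᵥ P.Q.mulVec x) + P.g ⬝ᵥ x

/-- The penalized objective ψ_ρ. -/
def LCQPData.psi (P : LCQPData n nA nc) (ρ : ℝ) (x : Fin n → ℝ) : ℝ :=
  P.obj x + ρ * P.phi x

/-- ∇ψ_ρ(x). -/
def LCQPData.gradPsi (P : LCQPData n nA nc) (ρ : ℝ) (x : Fin n → ℝ) : Fin n → ℝ :=
  P.Q.mulVec x + P.g + ρ • P.gradPhi x

/-- The convexified inner-loop model ϑ_{x̄,ρ}. -/
def LCQPData.theta (P : LCQPData n nA nc) (ρ : ℝ) (xb x : Fin n → ℝ) : ℝ :=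
  (1/2) * (x ⬝ᵥ P.Q.mulVec x) + (P.g + ρ • P.gradPhi xb) ⬝ᵥ x

/-- Strong stationarity of the LCQP. -/
def LCQPData.StrongStat (P : LCQPData n nA nc) (x : Fin n → ℝ)
    (yA : Fin nA → ℝ) (yL yR : Fin nc → ℝ) : Prop :=
  x ∈ P.feas ∧
  P.Q.mulVec x + P.g = P.Aᵀ.mulVec yA + P.Lᵀ.mulVec yL + P.Rᵀ.mulVec yR ∧
  (∀ i ∈ actF P.A P.lA P.uA x, yA i = 0) ∧
  (∀ i ∈ actL P.A P.lA P.uA x, 0 ≤ yA i) ∧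
  (∀ i ∈ actU P.A P.lA P.uA x, yA i ≤ 0) ∧
  (∀ i ∈ actF P.L P.lL P.uL x, yL i = 0) ∧
  (∀ i ∈ actL P.L P.lL P.uL x ∩ actL P.R P.lR P.uR x, 0 ≤ yL i) ∧
  (∀ i ∈ actU P.L P.lL P.uL x, yL i ≤ 0) ∧
  (∀ i ∈ actF P.R P.lR P.uR x, yR i = 0) ∧
  (∀ i ∈ actL P.L P.lL P.uL x ∩ actL P.R P.lR P.uR x, 0 ≤ yR i) ∧
  (∀ i ∈ actU P.R P.lR P.uR x, yR i ≤ 0)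

/-- KKT point of the penalized problem min_{x ∈ Ω̃} ψ_ρ(x). -/
def LCQPData.PenKKT (P : LCQPData n nA nc) (ρ : ℝ) (x : Fin n → ℝ)
    (yA : Fin nA → ℝ) (yL yR : Fin nc → ℝ) : Prop :=
  x ∈ P.relFeas ∧
  P.Q.mulVec x + P.g + ρ • P.gradPhi x
    = P.Aᵀ.mulVec yA + P.Lᵀ.mulVec yL + P.Rᵀ.mulVec yR ∧
  (∀ i ∈ actF P.A P.lA P.uA x, yA i = 0) ∧
  (∀ i ∈ actL P.A P.lA P.uA x, 0 ≤ yA i) ∧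
  (∀ i ∈ actU P.A P.lA P.uA x, yA i ≤ 0) ∧
  (∀ i ∈ actF P.L P.lL P.uL x, yL i = 0) ∧
  (∀ i ∈ actL P.L P.lL P.uL x, 0 ≤ yL i) ∧
  (∀ i ∈ actU P.L P.lL P.uL x, yL i ≤ 0) ∧
  (∀ i ∈ actF P.R P.lR P.uR x, yR i = 0) ∧
  (∀ i ∈ actL P.R P.lR P.uR x, 0 ≤ yR i) ∧
  (∀ i ∈ actU P.R P.lR P.uR x, yR i ≤ 0)

/-- Theorem 2.1(1) (Ralph–Wright): strong stationarity gives a KKT point of the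
penalized problem for every `ρ` at least the explicit threshold `ρ̄`. -/
theorem exact_penalty_direction1 (n nA nc : ℕ) (P : LCQPData n nA nc)
    (hQ : P.Q.PosDef)
    (hLbnd : ∀ i, P.lL i < P.uL i) (hRbnd : ∀ i, P.lR i < P.uR i)
    (xs : Fin n → ℝ) (yA : Fin nA → ℝ) (yL yR : Fin nc → ℝ)
    (hss : P.StrongStat xs yA yL yR) :
    ∀ ρ ≥ 1 + sSup (insert (0:ℝ)
        (((fun i => -(yL i) / (P.R.mulVec xs i - P.lR i)) ''
            (actL P.L P.lL P.uL xs \ (actL P.L P.lL P.uL xs ∩ actL P.R P.lR P.uR xs))) ∪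
         ((fun i => -(yR i) / (P.L.mulVec xs i - P.lL i)) ''
            (actL P.R P.lR P.uR xs \ (actL P.L P.lL P.uL xs ∩ actL P.R P.lR P.uR xs))))),
      P.PenKKT ρ xs yA
        (fun i => if i ∈ actL P.L P.lL P.uL xs
          then yL i + ρ * (P.R.mulVec xs i - P.lR i) else yL i)
        (fun i => if i ∈ actL P.R P.lR P.uR xs
          then yR i + ρ * (P.L.mulVec xs i - P.lL i) else yR i) := by
  intro ρ hρ
  obtain ⟨hfeas, hgrad, hAF, hAL, hAU, hLF, hWL, hLU, hRF, hWR, hRU⟩ := hss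
  obtain ⟨hrel, hphi⟩ := hfeas
  obtain ⟨hA, hL, hR⟩ := hrel
  -- finiteness / bddAbove of the sup set
  set S : Set ℝ := insert (0:ℝ)
        (((fun i => -(yL i) / (P.R.mulVec xs i - P.lR i)) ''
            (actL P.L P.lL P.uL xs \ (actL P.L P.lL P.uL xs ∩ actL P.R P.lR P.uR xs))) ∪
         ((fun i => -(yR i) / (P.L.mulVec xs i - P.lL i)) ''
            (actL P.R P.lR P.uR xs \ (actL P.L P.lL P.uL xs ∩ actL P.R P.lR P.uR xs)))) with hS
  have hSfin : S.Finite := by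
    apply Set.Finite.insert
    exact Set.Finite.union ((Set.toFinite _).image _) ((Set.toFinite _).image _)
  have hbdd : BddAbove S := hSfin.bddAbove
  have hsup0 : (0:ℝ) ≤ sSup S := le_csSup hbdd (Set.mem_insert 0 _)
  have hρ1 : (1:ℝ) ≤ ρ := by linarith
  have hρ0 : (0:ℝ) ≤ ρ := by linarith
  -- componentwise complementarity
  have hcomp : ∀ i, (P.L.mulVec xs i - P.lL i) * (P.R.mulVec xs i - P.lR i) = 0 := by
    intro i
    have h0 : ∀ j ∈ Finset.univ, (0:ℝ) ≤
        (P.L.mulVec xs - P.lL) j * (P.R.mulVec xs - P.lR) j := by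
      intro j _
      exact mul_nonneg (by simpa using sub_nonneg.mpr (hL j).1)
        (by simpa using sub_nonneg.mpr (hR j).1)
    have := (Finset.sum_eq_zero_iff_of_nonneg h0).1 (by simpa [LCQPData.phi, dotProduct] using hphi)
      i (Finset.mem_univ i)
    simpa using this
  -- R-slack vanishes off the lower-active set of L
  have hRzero : ∀ i, i ∉ actL P.L P.lL P.uL xs → P.R.mulVec xs i - P.lR i = 0 := by
    intro i hi
    rcases mul_eq_zero.1 (hcomp i) with h | h
    · exfalso
      have hl : P.lL i = P.L.mulVec xs i := by linarith [sub_eq_zero.1 h]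
      have hu : P.L.mulVec xs i < P.uL i := by
        have := (hL i).2
        rcases lt_or_eq_of_le this with h' | h'
        · exact h'
        · exact absurd (hl.trans h') (ne_of_lt (hLbnd i))
      exact hi ⟨hl, hu⟩
    · exact h
  -- L-slack vanishes off the lower-active set of R
  have hLzero : ∀ i, i ∉ actL P.R P.lR P.uR xs → P.L.mulVec xs i - P.lL i = 0 := by
    intro i hi
    rcases mul_eq_zero.1 (hcomp i) with h | h
    · exact h
    · exfalso
      have hl : P.lR i = P.R.mulVec xs i := by linarith [sub_eq_zero.1 h]
      have hu : P.R.mulVec xs i < P.uR i := by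
        have := (hR i).2
        rcases lt_or_eq_of_le this with h' | h'
        · exact h'
        · exact absurd (hl.trans h') (ne_of_lt (hRbnd i))
      exact hi ⟨hl, hu⟩
  -- the modified multipliers as vector identities
  have hyLvec : (fun i => if i ∈ actL P.L P.lL P.uL xs
      then yL i + ρ * (P.R.mulVec xs i - P.lR i) else yL i)
      = yL + ρ • (P.R.mulVec xs - P.lR) := by
    funext i
    by_cases hi : i ∈ actL P.L P.lL P.uL xs
    · simp [hi, Pi.add_apply, Pi.smul_apply, smul_eq_mul]
    · simp [hi, Pi.add_apply, Pi.smul_apply, smul_eq_mul, hRzero i hi]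
  have hyRvec : (fun i => if i ∈ actL P.R P.lR P.uR xs
      then yR i + ρ * (P.L.mulVec xs i - P.lL i) else yR i)
      = yR + ρ • (P.L.mulVec xs - P.lL) := by
    funext i
    by_cases hi : i ∈ actL P.R P.lR P.uR xs
    · simp [hi, Pi.add_apply, Pi.smul_apply, smul_eq_mul]
    · simp [hi, Pi.add_apply, Pi.smul_apply, smul_eq_mul, hLzero i hi]
  refine ⟨⟨hA, hL, hR⟩, ?_, hAF, hAL, hAU, ?_, ?_, ?_, ?_, ?_, ?_⟩
  · -- gradient equation
    rw [hyLvec, hyRvec, Matrix.mulVec_add, Matrix.mulVec_add, Matrix.mulVec_smul,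
      Matrix.mulVec_smul]
    have : P.Aᵀ.mulVec yA + (P.Lᵀ.mulVec yL + ρ • P.Lᵀ.mulVec (P.R.mulVec xs - P.lR))
        + (P.Rᵀ.mulVec yR + ρ • P.Rᵀ.mulVec (P.L.mulVec xs - P.lL))
        = (P.Aᵀ.mulVec yA + P.Lᵀ.mulVec yL + P.Rᵀ.mulVec yR)
          + ρ • (P.Lᵀ.mulVec (P.R.mulVec xs - P.lR) + P.Rᵀ.mulVec (P.L.mulVec xs - P.lL)) := by
      module
    rw [this, ← hgrad, LCQPData.gradPhi]
  · -- yL free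
    intro i hi
    have hnot : i ∉ actL P.L P.lL P.uL xs := fun h => absurd h.1.symm (ne_of_gt hi.1)
    simpa [hnot] using hLF i hi
  · -- yL lower-active nonneg
    intro i hi
    simp only [hi, if_pos]
    by_cases hiR : i ∈ actL P.R P.lR P.uR xs
    · have h1 : 0 ≤ yL i := hWL i ⟨hi, hiR⟩
      have h2 : P.R.mulVec xs i - P.lR i = 0 := by
        have := hiR.1; linarith
      rw [h2]; linarith
    · have hd : 0 < P.R.mulVec xs i - P.lR i := by
        have h1 : P.lR i ≤ P.R.mulVec xs i := (hR i).1
        rcases lt_or_eq_of_le h1 with h' | h'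
        · linarith
        · exfalso
          have hu : P.R.mulVec xs i < P.uR i := h' ▸ hRbnd i
          exact hiR ⟨h', hu⟩
      set d := P.R.mulVec xs i - P.lR i with hd'
      have hmem : -(yL i) / d ∈ S := by
        rw [hS]
        exact Set.mem_insert_of_mem _ (Or.inl ⟨i, ⟨hi, fun h => hiR h.2⟩, rfl⟩)
      have hle : -(yL i) / d ≤ sSup S := le_csSup hbdd hmem
      have : -(yL i) / d ≤ ρ := by linarith
      have := (div_le_iff₀ hd).1 this
      linarith
  · -- yL upper-active nonpos
    intro i hi
    have hnot : i ∉ actL P.L P.lL P.uL xs := fun h => absurd h.2 (not_lt.mpr (le_of_eq hi.2.symm))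
    simpa [hnot] using hLU i hi
  · -- yR free
    intro i hi
    have hnot : i ∉ actL P.R P.lR P.uR xs := fun h => absurd h.1.symm (ne_of_gt hi.1)
    simpa [hnot] using hRF i hi
  · -- yR lower-active nonneg
    intro i hi
    simp only [hi, if_pos]
    by_cases hiL : i ∈ actL P.L P.lL P.uL xs
    · have h1 : 0 ≤ yR i := hWR i ⟨hiL, hi⟩
      have h2 : P.L.mulVec xs i - P.lL i = 0 := by
        have := hiL.1; linarith
      rw [h2]; linarith
    · have hd : 0 < P.L.mulVec xs i - P.lL i := by
        have h1 : P.lL i ≤ P.L.mulVec xs i := (hL i).1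
        rcases lt_or_eq_of_le h1 with h' | h'
        · linarith
        · exfalso
          have hu : P.L.mulVec xs i < P.uL i := h' ▸ hLbnd i
          exact hiL ⟨h', hu⟩
      set d := P.L.mulVec xs i - P.lL i with hd'
      have hmem : -(yR i) / d ∈ S := by
        rw [hS]
        exact Set.mem_insert_of_mem _ (Or.inr ⟨i, ⟨hi, fun h => hiL h.1⟩, rfl⟩)
      have hle : -(yR i) / d ≤ sSup S := le_csSup hbdd hmem
      have : -(yR i) / d ≤ ρ := by linarith
      have := (div_le_iff₀ hd).1 this
      linarith
  · -- yR upper-active nonpos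
    intro i hi
    have hnot : i ∉ actL P.R P.lR P.uR xs := fun h => absurd h.2 (not_lt.mpr (le_of_eq hi.2.symm))
    simpa [hnot] using hRU i hi
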